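/- Let M, m, n be integers with 1 ≤ m < n ≤ M, and fix I > 0 and R > 0. Let G₁,…,G_M be i.i.d. exponential(1) channel gains with order statistics G_(1) ≤ ⋯ ≤ G_(M); write X = G_(m), Y = G_(n), and for transmit SNR ρ > 0 set a_n²(ρ) = max{0, (X − I/ρ)/(X(1+I))} and P_o^n(ρ) = P(log₂(1 + a_n²(ρ)·ρ·Y) < R). Then lim_{ρ→∞} (− log P_o^n(ρ) / log ρ) = m; i.e., the diversity order experienced by the n-th (stronger) user in CR-NOMA equals m, the index of the weaker paired user, regardless of n. -/

import Mathlib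

open MeasureTheory ProbabilityTheory Filter
open scoped ENNReal

/-- The `k`-th smallest entry (1-indexed) of a finite tuple of reals. -/
noncomputable def orderStat {M : ℕ} (g : Fin M → ℝ) (k : ℕ) : ℝ :=
  ((List.ofFn g).insertionSort (· ≤ ·)).getD (k - 1) 0


lemma sorted_get_le_iff {l : List ℝ} (hl : l.Pairwise (· ≤ ·)) {i : ℕ} (hi : i < l.length)
    (t : ℝ) : l.get ⟨i, hi⟩ ≤ t ↔ i + 1 ≤ l.countP (fun x => decide (x ≤ t)) := by
  constructor
  · intro h
    have hsplit := (List.countP_append (p := fun x => decide (x ≤ t)) (l₁ := l.take (i+1)) (l₂ := l.drop (i+1)))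
    rw [List.take_append_drop] at hsplit
    have htake : (l.take (i+1)).countP (fun x => decide (x ≤ t)) = (l.take (i+1)).length := by
      rw [List.countP_eq_length]
      intro a ha
      obtain ⟨j, hj, rfl⟩ := List.mem_iff_getElem.1 ha
      simp only [List.getElem_take]
      have hj' : j ≤ i := by
        have := hj
        simp only [List.length_take, lt_min_iff] at this
        omega
      have : l.get ⟨j, by omega⟩ ≤ l.get ⟨i, hi⟩ := hl.rel_get_of_le (by simpa using hj')
      simp only [List.get_eq_getElem] at this h
      simpa using le_trans this h
    have hlen : (l.take (i+1)).length = i + 1 := by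
      simp [List.length_take]; omega
    omega
  · intro h
    by_contra hc
    push_neg at hc
    have hsplit := (List.countP_append (p := fun x => decide (x ≤ t)) (l₁ := l.take i) (l₂ := l.drop i))
    rw [List.take_append_drop] at hsplit
    have hdrop : (l.drop i).countP (fun x => decide (x ≤ t)) = 0 := by
      rw [List.countP_eq_zero]
      intro a ha
      obtain ⟨j, hj, rfl⟩ := List.mem_iff_getElem.1 ha
      simp only [List.getElem_drop]
      have : l.get ⟨i, hi⟩ ≤ l.get ⟨i + j, by simp only [List.length_drop] at hj; omega⟩ :=
        hl.rel_get_of_le (by simp)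
      simp only [List.get_eq_getElem] at this hc
      simp only [decide_eq_true_eq]
      linarith
    have htake := List.countP_le_length (l := l.take i) (p := fun x => decide (x ≤ t))
    have : (l.take i).length ≤ i := by simp [List.length_take]
    omega

lemma orderStat_le_iff {M : ℕ} (g : Fin M → ℝ) {k : ℕ} (hk1 : 1 ≤ k) (hkM : k ≤ M) (t : ℝ) :
    orderStat g k ≤ t ↔ k ≤ (Finset.univ.filter (fun i => g i ≤ t)).card := by
  set l := (List.ofFn g).insertionSort (· ≤ ·) with hl
  have hlen : l.length = M := by simp [hl]
  have hklt : k - 1 < l.length := by omega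
  have hgetD : l.getD (k-1) 0 = l.get ⟨k-1, hklt⟩ := by
    rw [List.getD_eq_getElem _ _ hklt]; simp
  have hcount : l.countP (fun x => decide (x ≤ t)) = (List.ofFn g).countP (fun x => decide (x ≤ t)) :=
    (List.perm_insertionSort _ _).countP_eq _
  have hcard : (List.ofFn g).countP (fun x => decide (x ≤ t))
      = (Finset.univ.filter (fun i => g i ≤ t)).card := by
    rw [List.ofFn_eq_map, List.countP_map, List.countP_eq_length_filter]
    rw [Fin.univ_def]
    rfl
  rw [orderStat, ← hl, hgetD, sorted_get_le_iff (List.pairwise_insertionSort _ _) hklt t,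
    hcount, hcard]
  omega

lemma orderStat_nonneg {M : ℕ} {g : Fin M → ℝ} (hg : ∀ i, 0 ≤ g i) (k : ℕ) :
    0 ≤ orderStat g k := by
  rw [orderStat]
  set l := (List.ofFn g).insertionSort (· ≤ ·) with hl
  rcases lt_or_ge (k-1) l.length with h | h
  · rw [List.getD_eq_getElem _ _ h]
    have hmem : l[k-1] ∈ l := List.getElem_mem _
    have : l[k-1] ∈ List.ofFn g := (List.perm_insertionSort _ _).mem_iff.1 hmem
    obtain ⟨i, hi⟩ := List.mem_ofFn.1 this
    rw [← hi]; exact hg i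
  · rw [List.getD_eq_default _ _ h]

section Prob

variable {Ω : Type*} [MeasureSpace Ω] [IsProbabilityMeasure (ℙ : Measure Ω)]
  {M : ℕ} {G : Fin M → Ω → ℝ}

lemma prob_Iic (hGmeas : ∀ i, Measurable (G i))
    (hdist : ∀ i, Measure.map (G i) ℙ = expMeasure 1) (i : Fin M) (t : ℝ) :
    ℙ {ω | G i ω ≤ t} = ENNReal.ofReal (if 0 ≤ t then 1 - Real.exp (-t) else 0) := by
  have h1 : {ω | G i ω ≤ t} = G i ⁻¹' Set.Iic t := rfl
  haveI : IsProbabilityMeasure (expMeasure 1) := isProbabilityMeasure_expMeasure one_pos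
  rw [h1, ← Measure.map_apply (hGmeas i) measurableSet_Iic, hdist i, ← ofReal_cdf]
  rw [cdf_expMeasure_eq one_pos]
  simp

lemma prob_neg' (hGmeas : ∀ i, Measurable (G i))
    (hdist : ∀ i, Measure.map (G i) ℙ = expMeasure 1) (i : Fin M) :
    ℙ {ω | G i ω < 0} = 0 := by
  have h1 : {ω | G i ω < 0} = G i ⁻¹' Set.Iio 0 := rfl
  rw [h1, ← Measure.map_apply (hGmeas i) measurableSet_Iio, hdist i]
  rw [expMeasure, gammaMeasure, withDensity_apply _ measurableSet_Iio]
  exact lintegral_gammaPDF_of_nonpos le_rfl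

lemma prob_inter_eq (hindep : iIndepFun G ℙ)
    (s : Finset (Fin M)) (t : ℝ) :
    ℙ (⋂ i ∈ s, {ω | G i ω ≤ t}) = ∏ i ∈ s, ℙ {ω | G i ω ≤ t} := by
  have := hindep.measure_inter_preimage_eq_mul s
    (sets := fun _ => Set.Iic t) (fun i _ => measurableSet_Iic)
  exact this

lemma prob_inter_le (hGmeas : ∀ i, Measurable (G i))
    (hdist : ∀ i, Measure.map (G i) ℙ = expMeasure 1)
    (hindep : iIndepFun G ℙ)
    (s : Finset (Fin M)) {t : ℝ} (ht : 0 ≤ t) :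
    ℙ (⋂ i ∈ s, {ω | G i ω ≤ t}) = ENNReal.ofReal (1 - Real.exp (-t)) ^ s.card := by
  rw [prob_inter_eq hindep]
  rw [Finset.prod_congr rfl (fun i _ => prob_Iic hGmeas hdist i t)]
  rw [Finset.prod_const, if_pos ht]

/-- Upper bound: P(orderStat k ≤ t) ≤ C(M,k) t^k. -/
lemma prob_orderStat_upper (hGmeas : ∀ i, Measurable (G i))
    (hdist : ∀ i, Measure.map (G i) ℙ = expMeasure 1)
    (hindep : iIndepFun G ℙ)
    {k : ℕ} (hk1 : 1 ≤ k) (hkM : k ≤ M) {t : ℝ} (ht : 0 ≤ t) :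
    (ℙ {ω | orderStat (fun i => G i ω) k ≤ t}).toReal ≤ (M.choose k : ℝ) * t ^ k := by
  have hsub : {ω | orderStat (fun i => G i ω) k ≤ t} ⊆
      ⋃ s ∈ Finset.powersetCard k (Finset.univ : Finset (Fin M)),
        ⋂ i ∈ s, {ω | G i ω ≤ t} := by
    intro ω hω
    rw [Set.mem_setOf_eq, orderStat_le_iff _ hk1 hkM] at hω
    obtain ⟨s, hs, hcard⟩ := Finset.exists_subset_card_eq hω
    refine Set.mem_biUnion (Finset.mem_powersetCard.2 ⟨Finset.subset_univ _, hcard⟩) ?_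
    refine Set.mem_iInter₂.2 fun i hi => ?_
    exact (Finset.mem_filter.1 (hs hi)).2
  have hbound : ℙ {ω | orderStat (fun i => G i ω) k ≤ t} ≤
      (M.choose k : ℝ≥0∞) * ENNReal.ofReal (1 - Real.exp (-t)) ^ k := by
    refine le_trans (measure_mono hsub) ?_
    refine le_trans (measure_biUnion_finset_le _ _) ?_
    have : ∀ s ∈ Finset.powersetCard k (Finset.univ : Finset (Fin M)),
        ℙ (⋂ i ∈ s, {ω | G i ω ≤ t}) = ENNReal.ofReal (1 - Real.exp (-t)) ^ k := by
      intro s hs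
      rw [prob_inter_le hGmeas hdist hindep s ht, (Finset.mem_powersetCard.1 hs).2]
    rw [Finset.sum_congr rfl this, Finset.sum_const, Finset.card_powersetCard,
      Finset.card_univ, Fintype.card_fin, nsmul_eq_mul]
  have h1 : 1 - Real.exp (-t) ≤ t := by
    have := Real.add_one_le_exp (-t); linarith
  have h0 : 0 ≤ 1 - Real.exp (-t) := by
    have : Real.exp (-t) ≤ 1 := Real.exp_le_one_iff.2 (by linarith)
    linarith
  calc (ℙ {ω | orderStat (fun i => G i ω) k ≤ t}).toReal
      ≤ ((M.choose k : ℝ≥0∞) * ENNReal.ofReal (1 - Real.exp (-t)) ^ k).toReal := by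
        refine ENNReal.toReal_mono ?_ hbound
        exact ENNReal.mul_ne_top (ENNReal.natCast_ne_top _)
          (ENNReal.pow_ne_top ENNReal.ofReal_ne_top)
    _ = (M.choose k : ℝ) * (1 - Real.exp (-t)) ^ k := by
        rw [ENNReal.toReal_mul, ENNReal.toReal_pow, ENNReal.toReal_natCast,
          ENNReal.toReal_ofReal h0]
    _ ≤ (M.choose k : ℝ) * t ^ k := by
        gcongr
  
/-- Lower bound: P(orderStat k ≤ t) ≥ (e⁻¹ t)^k for 0 ≤ t ≤ 1. -/
lemma prob_orderStat_lower (hGmeas : ∀ i, Measurable (G i))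
    (hdist : ∀ i, Measure.map (G i) ℙ = expMeasure 1)
    (hindep : iIndepFun G ℙ)
    {k : ℕ} (hk1 : 1 ≤ k) (hkM : k ≤ M) {t : ℝ} (ht : 0 ≤ t) (ht1 : t ≤ 1) :
    (Real.exp (-1) * t) ^ k ≤ (ℙ {ω | orderStat (fun i => G i ω) k ≤ t}).toReal := by
  obtain ⟨s, -, hcard⟩ := Finset.exists_subset_card_eq
    (show k ≤ (Finset.univ : Finset (Fin M)).card by simpa using hkM)
  have hsub : (⋂ i ∈ s, {ω | G i ω ≤ t}) ⊆ {ω | orderStat (fun i => G i ω) k ≤ t} := by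
    intro ω hω
    rw [Set.mem_setOf_eq, orderStat_le_iff _ hk1 hkM]
    have : s ⊆ Finset.univ.filter (fun i => G i ω ≤ t) := by
      intro i hi
      exact Finset.mem_filter.2 ⟨Finset.mem_univ _, Set.mem_iInter₂.1 hω i hi⟩
    calc k = s.card := hcard.symm
      _ ≤ _ := Finset.card_le_card this
  have hP : ENNReal.ofReal (1 - Real.exp (-t)) ^ k ≤
      ℙ {ω | orderStat (fun i => G i ω) k ≤ t} := by
    have h := measure_mono (μ := (ℙ : Measure Ω)) hsub
    rwa [prob_inter_le hGmeas hdist hindep s ht, hcard] at h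
  have h0 : 0 ≤ 1 - Real.exp (-t) := by
    have : Real.exp (-t) ≤ 1 := Real.exp_le_one_iff.2 (by linarith)
    linarith
  have hkey : Real.exp (-1) * t ≤ 1 - Real.exp (-t) := by
    have h1 : Real.exp (-t) * t ≤ 1 - Real.exp (-t) := by
      have ha := Real.add_one_le_exp t
      have hb : Real.exp (-t) * Real.exp t = 1 := by
        rw [← Real.exp_add]; simp
      nlinarith [Real.exp_pos (-t)]
    have h2 : Real.exp (-1) ≤ Real.exp (-t) := Real.exp_le_exp.2 (by linarith)
    nlinarith
  calc (Real.exp (-1) * t) ^ k ≤ (1 - Real.exp (-t)) ^ k :=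
        pow_le_pow_left₀ (mul_nonneg (Real.exp_pos _).le ht) hkey k
    _ = (ENNReal.ofReal (1 - Real.exp (-t)) ^ k).toReal := by
        rw [ENNReal.toReal_pow, ENNReal.toReal_ofReal h0]
    _ ≤ _ := ENNReal.toReal_mono (measure_ne_top _ _) hP

end Prob

/-- Theorem 2, diversity order: in CR-NOMA with `X, Y` the `m`-th
and `n`-th order statistics of `M` i.i.d. exponential(1) channel gains, targeted
SINR `I > 0`, target rate `R > 0`, power coefficient
`a_n²(ρ) = max{0, (X − I/ρ)/(X(1+I))}` and outage probability
`P_o^n(ρ) = P(log₂(1 + a_n²(ρ)ρY) < R)`, one has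
`lim_{ρ→∞} (− log P_o^n(ρ)/log ρ) = m`: the diversity order of the `n`-th user
equals `m`, regardless of `n`. -/
theorem crnoma_diversity_order {Ω : Type*} [MeasureSpace Ω]
    [IsProbabilityMeasure (ℙ : Measure Ω)]
    (M m n : ℕ) (hm : 1 ≤ m) (hmn : m < n) (hnM : n ≤ M)
    (I R : ℝ) (hI : 0 < I) (hR : 0 < R)
    (G : Fin M → Ω → ℝ) (hGmeas : ∀ i, Measurable (G i))
    (hindep : iIndepFun G ℙ)
    (hdist : ∀ i, Measure.map (G i) ℙ = expMeasure 1) :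
    Tendsto (fun ρ : ℝ =>
        -(Real.log ((ℙ {ω |
            Real.logb 2 (1 +
              max 0 ((orderStat (fun i => G i ω) m - I / ρ) /
                (orderStat (fun i => G i ω) m * (1 + I))) * ρ *
              orderStat (fun i => G i ω) n) < R}).toReal) /
          Real.log ρ))
      atTop (nhds (m : ℝ)) := by
  have hmM : m ≤ M := le_trans (le_of_lt hmn) hnM
  have hn1 : 1 ≤ n := le_trans hm (le_of_lt hmn)
  set E : ℝ → Set Ω := fun ρ => {ω |
      Real.logb 2 (1 +
        max 0 ((orderStat (fun i => G i ω) m - I / ρ) /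
          (orderStat (fun i => G i ω) m * (1 + I))) * ρ *
        orderStat (fun i => G i ω) n) < R} with hE
  set N : Set Ω := {ω | ∀ i, 0 ≤ G i ω} with hNdef
  have hN : ℙ Nᶜ = 0 := by
    have hsub : Nᶜ ⊆ ⋃ i, {ω | G i ω < 0} := by
      intro ω hω
      simp only [hNdef, Set.mem_compl_iff, Set.mem_setOf_eq, not_forall, not_le] at hω
      obtain ⟨i, hi⟩ := hω
      exact Set.mem_iUnion.2 ⟨i, hi⟩
    refine measure_mono_null hsub (measure_iUnion_null fun i => prob_neg' hGmeas hdist i)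
  -- constants
  have h2R : (1:ℝ) < (2:ℝ) ^ R := by
    rw [show (1:ℝ) = (2:ℝ) ^ (0:ℝ) by simp]
    exact Real.rpow_lt_rpow_left_iff one_lt_two |>.2 hR
  set ε : ℝ := (2:ℝ) ^ R - 1 with hεdef
  have hε : 0 < ε := by rw [hεdef]; linarith
  set c : ℝ := 2 * ε * (1 + I) with hcdef
  have hc : 0 < c := by positivity
  set c₁ : ℝ := (Real.exp (-1) * I) ^ m with hc₁def
  have hc₁ : 0 < c₁ := by positivity
  set K : ℝ := (M.choose m : ℝ) * (2*I) ^ m + (M.choose n : ℝ) * c ^ m with hKdef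
  have hchoosem : 0 < (M.choose m : ℝ) := by
    exact_mod_cast Nat.cast_pos.2 (Nat.choose_pos hmM)
  have hK : 0 < K := by positivity
  -- lower bound
  have hlow : ∀ ρ : ℝ, I ≤ ρ → c₁ / ρ ^ m ≤ (ℙ (E ρ)).toReal := by
    intro ρ hρ
    have hρ0 : 0 < ρ := lt_of_lt_of_le hI hρ
    have hincl : {ω | orderStat (fun i => G i ω) m ≤ I / ρ} ∩ N ⊆ E ρ := by
      rintro ω ⟨h1, h2⟩
      have hX0 : 0 ≤ orderStat (fun i => G i ω) m := orderStat_nonneg h2 m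
      have hdiv : (orderStat (fun i => G i ω) m - I / ρ) /
          (orderStat (fun i => G i ω) m * (1 + I)) ≤ 0 := by
        apply div_nonpos_of_nonpos_of_nonneg
        · have : (0:ℝ) < I / ρ := div_pos hI hρ0
          have hle : orderStat (fun i => G i ω) m ≤ I / ρ := h1
          linarith
        · exact mul_nonneg hX0 (by linarith)
      show Real.logb 2 _ < R
      rw [max_eq_left hdiv]
      simpa using hR
    have hmeas : ℙ {ω | orderStat (fun i => G i ω) m ≤ I / ρ} ≤ ℙ (E ρ) := by
      calc ℙ {ω | orderStat (fun i => G i ω) m ≤ I / ρ}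
          ≤ ℙ (({ω | orderStat (fun i => G i ω) m ≤ I / ρ} ∩ N) ∪ Nᶜ) := by
            refine measure_mono fun ω hω => ?_
            by_cases hωN : ω ∈ N
            · exact Or.inl ⟨hω, hωN⟩
            · exact Or.inr hωN
        _ ≤ ℙ ({ω | orderStat (fun i => G i ω) m ≤ I / ρ} ∩ N) + ℙ Nᶜ :=
            measure_union_le _ _
        _ ≤ ℙ (E ρ) + 0 := by
            rw [hN]; exact add_le_add_left (measure_mono hincl) 0
        _ = ℙ (E ρ) := by rw [add_zero]
    have ht0 : 0 ≤ I / ρ := le_of_lt (div_pos hI hρ0)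
    have ht1 : I / ρ ≤ 1 := (div_le_one hρ0).2 hρ
    calc c₁ / ρ ^ m = (Real.exp (-1) * (I / ρ)) ^ m := by
          rw [show Real.exp (-1) * (I / ρ) = (Real.exp (-1) * I) / ρ by ring, div_pow, hc₁def]
      _ ≤ (ℙ {ω | orderStat (fun i => G i ω) m ≤ I / ρ}).toReal :=
          prob_orderStat_lower hGmeas hdist hindep hm hmM ht0 ht1
      _ ≤ (ℙ (E ρ)).toReal := ENNReal.toReal_mono (measure_ne_top _ _) hmeas
  -- upper bound
  have hup : ∀ ρ : ℝ, max c 1 ≤ ρ → (ℙ (E ρ)).toReal ≤ K / ρ ^ m := by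
    intro ρ hρ
    have hρc : c ≤ ρ := le_trans (le_max_left _ _) hρ
    have hρ1 : (1:ℝ) ≤ ρ := le_trans (le_max_right _ _) hρ
    have hρ0 : 0 < ρ := lt_of_lt_of_le one_pos hρ1
    have hincl : E ρ ∩ N ⊆ {ω | orderStat (fun i => G i ω) m ≤ 2*I/ρ} ∪
        {ω | orderStat (fun i => G i ω) n ≤ c/ρ} := by
      rintro ω ⟨hout, h2⟩
      by_cases hX : orderStat (fun i => G i ω) m ≤ 2*I/ρ
      · exact Or.inl hX
      · right
        push_neg at hX
        set X := orderStat (fun i => G i ω) m with hXdef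
        set Y := orderStat (fun i => G i ω) n with hYdef
        have hXpos : 0 < X := lt_trans (by positivity) hX
        have hY0 : 0 ≤ Y := orderStat_nonneg h2 n
        set a : ℝ := max 0 ((X - I / ρ) / (X * (1 + I))) with hadef
        have ha0 : 0 ≤ a := le_max_left _ _
        have hnum : X / 2 ≤ X - I / ρ := by
          have h1 : 2 * I / ρ < X := hX
          have h2 : 2 * I / ρ = 2 * (I / ρ) := by ring
          linarith
        have hden : 0 < X * (1 + I) := by positivity
        have ha_lb : 1 / (2 * (1 + I)) ≤ a := by
          have h1 : X / 2 / (X * (1 + I)) ≤ (X - I / ρ) / (X * (1 + I)) := by gcongr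
          have h2 : X / 2 / (X * (1 + I)) = 1 / (2 * (1 + I)) := by
            field_simp
          rw [← h2]
          exact le_trans h1 (le_max_right _ _)
        have harg' : (0:ℝ) < 1 + a * ρ * Y := by positivity
        have hlt : 1 + a * ρ * Y < (2:ℝ) ^ R :=
          (Real.logb_lt_iff_lt_rpow one_lt_two harg').1 hout
        have haY : a * ρ * Y < ε := by rw [hεdef]; linarith
        have hchain : 1 / (2 * (1 + I)) * (ρ * Y) ≤ a * ρ * Y := by
          have h5 := mul_le_mul_of_nonneg_right ha_lb (mul_nonneg hρ0.le hY0)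
          calc 1 / (2 * (1 + I)) * (ρ * Y) ≤ a * (ρ * Y) := h5
            _ = a * ρ * Y := by ring
        have hρY : ρ * Y < c := by
          have h3 : 1 / (2 * (1 + I)) * (ρ * Y) < ε := lt_of_le_of_lt hchain haY
          have h4 : (0:ℝ) < 2 * (1 + I) := by positivity
          rw [hcdef]
          calc ρ * Y = (1 / (2 * (1 + I)) * (ρ * Y)) * (2 * (1 + I)) := by
                field_simp
            _ < ε * (2 * (1 + I)) := mul_lt_mul_of_pos_right h3 h4
            _ = 2 * ε * (1 + I) := by ring
        show Y ≤ c / ρ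
        rw [le_div_iff₀ hρ0]
        linarith [hρY]
    have hmeas : ℙ (E ρ) ≤ ℙ {ω | orderStat (fun i => G i ω) m ≤ 2*I/ρ} +
        ℙ {ω | orderStat (fun i => G i ω) n ≤ c/ρ} := by
      calc ℙ (E ρ) ≤ ℙ ((E ρ ∩ N) ∪ Nᶜ) := by
            refine measure_mono fun ω hω => ?_
            by_cases hωN : ω ∈ N
            · exact Or.inl ⟨hω, hωN⟩
            · exact Or.inr hωN
        _ ≤ ℙ (E ρ ∩ N) + ℙ Nᶜ := measure_union_le _ _
        _ = ℙ (E ρ ∩ N) := by rw [hN, add_zero]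
        _ ≤ ℙ ({ω | orderStat (fun i => G i ω) m ≤ 2*I/ρ} ∪
              {ω | orderStat (fun i => G i ω) n ≤ c/ρ}) := measure_mono hincl
        _ ≤ _ := measure_union_le _ _
    have ht20 : 0 ≤ 2*I/ρ := by positivity
    have htc0 : 0 ≤ c/ρ := by positivity
    have htc1 : c/ρ ≤ 1 := (div_le_one hρ0).2 hρc
    calc (ℙ (E ρ)).toReal
        ≤ (ℙ {ω | orderStat (fun i => G i ω) m ≤ 2*I/ρ} +
            ℙ {ω | orderStat (fun i => G i ω) n ≤ c/ρ}).toReal :=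
          ENNReal.toReal_mono (ENNReal.add_ne_top.2 ⟨measure_ne_top _ _, measure_ne_top _ _⟩) hmeas
      _ = (ℙ {ω | orderStat (fun i => G i ω) m ≤ 2*I/ρ}).toReal +
            (ℙ {ω | orderStat (fun i => G i ω) n ≤ c/ρ}).toReal :=
          ENNReal.toReal_add (measure_ne_top _ _) (measure_ne_top _ _)
      _ ≤ (M.choose m : ℝ) * (2*I/ρ) ^ m + (M.choose n : ℝ) * (c/ρ) ^ n := by
          gcongr
          · exact prob_orderStat_upper hGmeas hdist hindep hm hmM ht20
          · exact prob_orderStat_upper hGmeas hdist hindep hn1 hnM htc0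
      _ ≤ (M.choose m : ℝ) * (2*I/ρ) ^ m + (M.choose n : ℝ) * (c/ρ) ^ m :=
          add_le_add_right (mul_le_mul_of_nonneg_left
            (pow_le_pow_of_le_one htc0 htc1 (le_of_lt hmn)) (Nat.cast_nonneg _)) _
      _ = K / ρ ^ m := by
          rw [hKdef, div_pow, div_pow]
          field_simp
  -- conclusion via squeeze
  have hKlim : Tendsto (fun ρ : ℝ => (m:ℝ) - Real.log K / Real.log ρ) atTop (nhds (m:ℝ)) := by
    have h1 : Tendsto (fun ρ : ℝ => Real.log K / Real.log ρ) atTop (nhds 0) :=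
      Tendsto.div_atTop tendsto_const_nhds Real.tendsto_log_atTop
    simpa using tendsto_const_nhds.sub h1
  have hc₁lim : Tendsto (fun ρ : ℝ => (m:ℝ) - Real.log c₁ / Real.log ρ) atTop (nhds (m:ℝ)) := by
    have h1 : Tendsto (fun ρ : ℝ => Real.log c₁ / Real.log ρ) atTop (nhds 0) :=
      Tendsto.div_atTop tendsto_const_nhds Real.tendsto_log_atTop
    simpa using tendsto_const_nhds.sub h1
  refine tendsto_of_tendsto_of_tendsto_of_le_of_le' hKlim hc₁lim ?_ ?_
  · filter_upwards [eventually_ge_atTop (max (max I (max c 1)) 2)] with ρ hρ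
    have hρI : I ≤ ρ := le_trans (le_trans (le_max_left _ _) (le_max_left _ _)) hρ
    have hρc1 : max c 1 ≤ ρ := le_trans (le_trans (le_max_right _ _) (le_max_left _ _)) hρ
    have hρ2 : (2:ℝ) ≤ ρ := le_trans (le_max_right _ _) hρ
    have hρ0 : (0:ℝ) < ρ := by linarith
    have hlogρ : 0 < Real.log ρ := Real.log_pos (by linarith)
    have hPl := hlow ρ hρI
    have hPu := hup ρ hρc1
    have hP0 : 0 < (ℙ (E ρ)).toReal := lt_of_lt_of_le (by positivity) hPl
    have hu : Real.log ((ℙ (E ρ)).toReal) ≤ Real.log K - (m:ℝ) * Real.log ρ := by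
      have h6 := Real.log_le_log hP0 hPu
      rwa [Real.log_div hK.ne' (pow_ne_zero _ hρ0.ne'), Real.log_pow (n := m) (x := ρ)] at h6
    have e1 : (m:ℝ) - Real.log K / Real.log ρ =
        ((m:ℝ) * Real.log ρ - Real.log K) / Real.log ρ := by
      field_simp
    have e2 : -(Real.log ((ℙ (E ρ)).toReal) / Real.log ρ) =
        (-Real.log ((ℙ (E ρ)).toReal)) / Real.log ρ := by ring
    rw [e1, e2]
    exact (div_le_div_iff_of_pos_right hlogρ).2 (by linarith)
  · filter_upwards [eventually_ge_atTop (max (max I (max c 1)) 2)] with ρ hρ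
    have hρI : I ≤ ρ := le_trans (le_trans (le_max_left _ _) (le_max_left _ _)) hρ
    have hρ2 : (2:ℝ) ≤ ρ := le_trans (le_max_right _ _) hρ
    have hρ0 : (0:ℝ) < ρ := by linarith
    have hlogρ : 0 < Real.log ρ := Real.log_pos (by linarith)
    have hPl := hlow ρ hρI
    have hP0 : 0 < (ℙ (E ρ)).toReal := lt_of_lt_of_le (by positivity) hPl
    have hl : Real.log c₁ - (m:ℝ) * Real.log ρ ≤ Real.log ((ℙ (E ρ)).toReal) := by
      have h6 := Real.log_le_log (by positivity : (0:ℝ) < c₁ / ρ ^ m) hPl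
      rwa [Real.log_div hc₁.ne' (pow_ne_zero _ hρ0.ne'), Real.log_pow (n := m) (x := ρ)] at h6
    have e1 : (m:ℝ) - Real.log c₁ / Real.log ρ =
        ((m:ℝ) * Real.log ρ - Real.log c₁) / Real.log ρ := by
      field_simp
    have e2 : -(Real.log ((ℙ (E ρ)).toReal) / Real.log ρ) =
        (-Real.log ((ℙ (E ρ)).toReal)) / Real.log ρ := by ring
    rw [e1, e2]
    exact (div_le_div_iff_of_pos_right hlogρ).2 (by linarith)
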